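/- Define J⁺ = Σ_{α>0} r_α c^{−α} c^α, J⁻ = Σ_{α>0} (1/r_α) b_{−α} b_α, and gh_rel = Σ_{α>0}(c^{−α} b_α − b_{−α} c^α), where r_α = ⟨χ+2ρ, H_α⟩ > 0 for α > 0. Then these operators satisfy the sl(2) structural relations [J⁺, J⁻] = gh_rel and [gh_rel, J^±] = ±2 J^±. -/

import Mathlib

open Finset

/-- the operators `J⁺ = Σ_{α>0} r_α c^{−α}c^α`,
`J⁻ = Σ_{α>0} (1/r_α) b_{−α}b_α` and
`gh_rel = Σ_{α>0} (c^{−α}b_α − b_{−α}c^α)` satisfy the `sl(2)` relations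
`[J⁺, J⁻] = gh_rel` and `[gh_rel, J^±] = ±2 J^±`. -/
theorem sl2_from_anomaly
    {Q A : Type*} [AddCommGroup Q] [DecidableEq Q] [Ring A] [Algebra ℂ A]
    (Rp : Finset Q)                         -- positive roots
    (c b : Q → A) (r : Q → ℂ)
    (Jp Jm gh : A)
    (hdisj : ∀ α ∈ Rp, -α ∉ Rp)
    -- r_α = ⟨χ+2ρ, H_α⟩ ≠ 0 for positive roots
    (hr : ∀ α ∈ Rp, r α ≠ 0)
    -- canonical anticommutation relations on the root sector
    (hcb : ∀ α ∈ Rp ∪ Rp.image (fun a => -a), ∀ β ∈ Rp ∪ Rp.image (fun a => -a),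
      c α * b β + b β * c α = if α = -β then (1 : A) else 0)
    (hcc : ∀ α ∈ Rp ∪ Rp.image (fun a => -a), ∀ β ∈ Rp ∪ Rp.image (fun a => -a),
      c α * c β + c β * c α = 0)
    (hbb : ∀ α ∈ Rp ∪ Rp.image (fun a => -a), ∀ β ∈ Rp ∪ Rp.image (fun a => -a),
      b α * b β + b β * b α = 0)
    (hJp : Jp = ∑ α ∈ Rp, r α • (c (-α) * c α))
    (hJm : Jm = ∑ α ∈ Rp, (r α)⁻¹ • (b (-α) * b α))
    (hgh : gh = ∑ α ∈ Rp, (c (-α) * b α - b (-α) * c α)) :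
    (Jp * Jm - Jm * Jp = gh)
    ∧ (gh * Jp - Jp * gh = (2 : ℂ) • Jp)
    ∧ (gh * Jm - Jm * gh = (-2 : ℂ) • Jm) := by
  -- membership helpers
  have hmem : ∀ α ∈ Rp, α ∈ Rp ∪ Rp.image (fun a => -a) :=
    fun α h => Finset.mem_union_left _ h
  have hmem' : ∀ α ∈ Rp, -α ∈ Rp ∪ Rp.image (fun a => -a) :=
    fun α h => Finset.mem_union_right _ (Finset.mem_image_of_mem _ h)
  have hne : ∀ α ∈ Rp, ∀ β ∈ Rp, -α ≠ β := by
    intro α hα β hβ h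
    exact hdisj α hα (h ▸ hβ)
  have hne2 : ∀ α ∈ Rp, ∀ β ∈ Rp, α ≠ -β := by
    intro α hα β hβ h
    exact hdisj β hβ (h ▸ hα)
  have hbc : ∀ α ∈ Rp ∪ Rp.image (fun a => -a), ∀ β ∈ Rp ∪ Rp.image (fun a => -a),
      b β * c α + c α * b β = if α = -β then (1 : A) else 0 := by
    intro α hα β hβ; rw [add_comm]; exact hcb α hα β hβ
  -- general commutator-of-bilinears identity
  have comm4 : ∀ x y z w : A, x*y*(z*w) - z*w*(x*y)
      = x*(y*z+z*y)*w - x*z*(y*w+w*y) + (x*z+z*x)*w*y - z*(x*w+w*x)*y := by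
    intro x y z w; noncomm_ring
  -- double sum of commutators
  have sumcomm : ∀ (f g : Q → A),
      (∑ α ∈ Rp, f α) * (∑ β ∈ Rp, g β) - (∑ β ∈ Rp, g β) * (∑ α ∈ Rp, f α)
        = ∑ α ∈ Rp, ∑ β ∈ Rp, (f α * g β - g β * f α) := by
    intro f g
    rw [Finset.sum_mul_sum, Finset.sum_mul_sum,
      Finset.sum_comm (s := Rp) (t := Rp) (f := fun β α => g β * f α),
      ← Finset.sum_sub_distrib]
    exact Finset.sum_congr rfl fun α _ => (Finset.sum_sub_distrib _ _).symm
  have smulcomm : ∀ (a e : ℂ) (x y : A),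
      (a • x) * (e • y) - (e • y) * (a • x) = (a * e) • (x * y - y * x) := by
    intro a e x y
    rw [smul_mul_assoc, mul_smul_comm, smul_mul_assoc, mul_smul_comm,
      smul_smul, smul_smul, mul_comm e a, smul_sub]
  -- pointwise commutators
  have E1 : ∀ α ∈ Rp, ∀ β ∈ Rp,
      c (-α) * c α * (b (-β) * b β) - b (-β) * b β * (c (-α) * c α)
        = if β = α then c (-α) * b α - b (-α) * c α else 0 := by
    intro α hα β hβ
    rw [comm4, hcb α (hmem α hα) (-β) (hmem' β hβ),
      hcb α (hmem α hα) β (hmem β hβ),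
      hcb (-α) (hmem' α hα) (-β) (hmem' β hβ),
      hcb (-α) (hmem' α hα) β (hmem β hβ)]
    by_cases h : β = α
    · subst h
      simp [hne β hβ β hβ, hne2 β hβ β hβ]
    · have h' : α ≠ β := fun hh => h hh.symm
      simp [h, h', hne α hα β hβ, hne2 α hα β hβ, hne β hβ α hα, hne2 β hβ α hα]
  have E2 : ∀ α ∈ Rp, ∀ β ∈ Rp,
      (c (-β) * b β - b (-β) * c β) * (c (-α) * c α)
        - c (-α) * c α * (c (-β) * b β - b (-β) * c β)
        = if β = α then c (-α) * c α + c (-α) * c α else 0 := by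
    intro α hα β hβ
    have t1 := comm4 (c (-β)) (b β) (c (-α)) (c α)
    rw [hbc (-α) (hmem' α hα) β (hmem β hβ), hbc α (hmem α hα) β (hmem β hβ),
      hcc (-β) (hmem' β hβ) (-α) (hmem' α hα),
      hcc (-β) (hmem' β hβ) α (hmem α hα)] at t1
    have t2 := comm4 (b (-β)) (c β) (c (-α)) (c α)
    rw [hcc β (hmem β hβ) (-α) (hmem' α hα), hcc β (hmem β hβ) α (hmem α hα),
      hbc (-α) (hmem' α hα) (-β) (hmem' β hβ),
      hbc α (hmem α hα) (-β) (hmem' β hβ)] at t2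
    have expand : (c (-β) * b β - b (-β) * c β) * (c (-α) * c α)
        - c (-α) * c α * (c (-β) * b β - b (-β) * c β)
        = (c (-β) * b β * (c (-α) * c α) - c (-α) * c α * (c (-β) * b β))
          - (b (-β) * c β * (c (-α) * c α) - c (-α) * c α * (b (-β) * c β)) := by
      noncomm_ring
    rw [expand, t1, t2]
    by_cases h : β = α
    · subst h
      simp [hne β hβ β hβ, hne2 β hβ β hβ]
    · have h' : α ≠ β := fun hh => h hh.symm
      simp [h, h', hne α hα β hβ, hne2 α hα β hβ, hne β hβ α hα, hne2 β hβ α hα]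
  have E3 : ∀ α ∈ Rp, ∀ β ∈ Rp,
      (c (-β) * b β - b (-β) * c β) * (b (-α) * b α)
        - b (-α) * b α * (c (-β) * b β - b (-β) * c β)
        = if β = α then -(b (-α) * b α) - b (-α) * b α else 0 := by
    intro α hα β hβ
    have t1 := comm4 (c (-β)) (b β) (b (-α)) (b α)
    rw [hbb β (hmem β hβ) (-α) (hmem' α hα), hbb β (hmem β hβ) α (hmem α hα),
      hcb (-β) (hmem' β hβ) (-α) (hmem' α hα),
      hcb (-β) (hmem' β hβ) α (hmem α hα)] at t1
    have t2 := comm4 (b (-β)) (c β) (b (-α)) (b α)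
    rw [hcb β (hmem β hβ) (-α) (hmem' α hα), hcb β (hmem β hβ) α (hmem α hα),
      hbb (-β) (hmem' β hβ) (-α) (hmem' α hα),
      hbb (-β) (hmem' β hβ) α (hmem α hα)] at t2
    have expand : (c (-β) * b β - b (-β) * c β) * (b (-α) * b α)
        - b (-α) * b α * (c (-β) * b β - b (-β) * c β)
        = (c (-β) * b β * (b (-α) * b α) - b (-α) * b α * (c (-β) * b β))
          - (b (-β) * c β * (b (-α) * b α) - b (-α) * b α * (b (-β) * c β)) := by
      noncomm_ring
    rw [expand, t1, t2]
    by_cases h : β = α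
    · subst h
      simp [hne β hβ β hβ, hne2 β hβ β hβ]
    · have h' : α ≠ β := fun hh => h hh.symm
      simp [h, h', hne α hα β hβ, hne2 α hα β hβ, hne β hβ α hα, hne2 β hβ α hα]
  refine ⟨?_, ?_, ?_⟩
  · -- [Jp, Jm] = gh
    rw [hJp, hJm, hgh, sumcomm]
    refine Finset.sum_congr rfl fun α hα => ?_
    have inner : ∀ β ∈ Rp,
        (r α • (c (-α) * c α)) * ((r β)⁻¹ • (b (-β) * b β))
          - ((r β)⁻¹ • (b (-β) * b β)) * (r α • (c (-α) * c α))
          = if β = α then c (-α) * b α - b (-α) * c α else 0 := by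
      intro β hβ
      rw [smulcomm, E1 α hα β hβ]
      by_cases h : β = α
      · subst h
        simp only [if_pos rfl, if_true]
        rw [mul_inv_cancel₀ (hr β hβ), one_smul]
      · simp only [if_neg h]
        rw [smul_zero]
    rw [Finset.sum_congr rfl inner]
    simp [Finset.sum_ite_eq', hα]
  · -- [gh, Jp] = 2 Jp
    rw [hgh, hJp, sumcomm, Finset.smul_sum]
    refine Finset.sum_congr rfl fun β hβ => ?_
    have inner : ∀ α ∈ Rp,
        (c (-β) * b β - b (-β) * c β) * (r α • (c (-α) * c α))
          - (r α • (c (-α) * c α)) * (c (-β) * b β - b (-β) * c β)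
          = if β = α then (2 : ℂ) • (r β • (c (-β) * c β)) else 0 := by
      intro α hα
      rw [mul_smul_comm, smul_mul_assoc, ← smul_sub, E2 α hα β hβ]
      by_cases h : β = α
      · subst h
        simp only [if_pos rfl, if_true]
        rw [smul_add, two_smul]
      · simp only [if_neg h]
        rw [smul_zero]
    rw [Finset.sum_congr rfl inner]
    simp [Finset.sum_ite_eq, hβ]
  · -- [gh, Jm] = -2 Jm
    rw [hgh, hJm, sumcomm, Finset.smul_sum]
    refine Finset.sum_congr rfl fun β hβ => ?_
    have inner : ∀ α ∈ Rp,
        (c (-β) * b β - b (-β) * c β) * ((r α)⁻¹ • (b (-α) * b α))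
          - ((r α)⁻¹ • (b (-α) * b α)) * (c (-β) * b β - b (-β) * c β)
          = if β = α then (-2 : ℂ) • ((r β)⁻¹ • (b (-β) * b β)) else 0 := by
      intro α hα
      rw [mul_smul_comm, smul_mul_assoc, ← smul_sub, E3 α hα β hβ]
      by_cases h : β = α
      · subst h
        simp only [if_pos rfl, if_true]
        rw [smul_sub, smul_neg, neg_smul, two_smul]
        abel
      · simp only [if_neg h]
        rw [smul_zero]
    rw [Finset.sum_congr rfl inner]
    simp [Finset.sum_ite_eq, hβ]
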